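/- arXiv:2605.03386 — 2 statements merged into one kernel-verified Lean document; each statement's English description precedes it below -/
import Mathlib

section
/- Let E be a real Banach space, f : E → E Lipschitz with constant L ≥ 0, and φ : ℝ × E → E a global flow of f. Then for every t ∈ ℝ the time-t flow map φ(t, ·) : E → E is a bijection with inverse φ(−t, ·), and both φ(t, ·) and its inverse are Lipschitz with constant e^{L|t|}; in particular φ(t, ·) is a homeomorphism of E, so a standard Neural ODE preserves the topology of the input space. -/
open Real Set

/-- Grönwall: two solutions of an autonomous Lipschitz ODE on `[0, b]`. -/
lemma gronwall_aux {E : Type*} [NormedAddCommGroup E] [NormedSpace ℝ E]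
    (g : E → E) (K : NNReal) (hg : LipschitzWith K g)
    (u v : ℝ → E)
    (hu : ∀ s, HasDerivAt u (g (u s)) s)
    (hv : ∀ s, HasDerivAt v (g (v s)) s)
    (b : ℝ) (hb : 0 ≤ b) :
    dist (u b) (v b) ≤ dist (u 0) (v 0) * Real.exp (K * b) := by
  have := dist_le_of_trajectories_ODE (v := fun _ => g) (K := K)
    (fun _ => hg)
    (fun s _ => (hu s).continuousAt.continuousWithinAt)
    (fun s _ => (hu s).hasDerivWithinAt)
    (fun s _ => (hv s).continuousAt.continuousWithinAt)
    (fun s _ => (hv s).hasDerivWithinAt)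
    le_rfl b ⟨hb, le_rfl⟩
  simpa using this

/-- Two-sided Grönwall via time reversal. -/
lemma gronwall_aux2 {E : Type*} [NormedAddCommGroup E] [NormedSpace ℝ E]
    (g : E → E) (K : NNReal) (hg : LipschitzWith K g)
    (u v : ℝ → E)
    (hu : ∀ s, HasDerivAt u (g (u s)) s)
    (hv : ∀ s, HasDerivAt v (g (v s)) s)
    (b : ℝ) :
    dist (u b) (v b) ≤ dist (u 0) (v 0) * Real.exp (K * |b|) := by
  rcases le_total 0 b with hb | hb
  · rw [abs_of_nonneg hb]; exact gronwall_aux g K hg u v hu hv b hb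
  · rw [abs_of_nonpos hb]
    have hg' : LipschitzWith K (fun x => -(g x)) := hg.neg
    have hu' : ∀ s, HasDerivAt (fun s => u (-s)) (-(g (u (-s)))) s := by
      intro s
      have := (hu (-s)).scomp s (hasDerivAt_neg s)
      simpa [Function.comp_def] using this
    have hv' : ∀ s, HasDerivAt (fun s => v (-s)) (-(g (v (-s)))) s := by
      intro s
      have := (hv (-s)).scomp s (hasDerivAt_neg s)
      simpa [Function.comp_def] using this
    have := gronwall_aux (fun x => -(g x)) K hg' (fun s => u (-s)) (fun s => v (-s))
      hu' hv' (-b) (neg_nonneg.2 hb)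
    simpa using this

/-- **The time-`t` flow map of a Lipschitz Neural ODE is a bi-Lipschitz homeomorphism.**
If `φ` is a global flow of a Lipschitz vector field `f` (constant `L ≥ 0`), then for every
`t ∈ ℝ` the map `φ t : E → E` is a bijection with inverse `φ (-t)`, both `φ t` and `φ (-t)`
are Lipschitz with constant `exp (L |t|)`, and `φ t` is a homeomorphism of `E`: a standard
Neural ODE preserves the topology of the input space. -/
theorem lipschitz_flow_homeomorph
    {E : Type*} [NormedAddCommGroup E] [NormedSpace ℝ E] [CompleteSpace E]
    (f : E → E) (L : ℝ) (hL : 0 ≤ L)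
    (hf : ∀ x y : E, ‖f x - f y‖ ≤ L * ‖x - y‖)
    (φ : ℝ → E → E)
    (hφ0 : ∀ x : E, φ 0 x = x)
    (hφ' : ∀ (x : E) (t : ℝ), HasDerivAt (fun s => φ s x) (f (φ t x)) t)
    (t : ℝ) :
    Function.Bijective (φ t) ∧
      (∀ x : E, φ (-t) (φ t x) = x) ∧
      (∀ x : E, φ t (φ (-t) x) = x) ∧
      (∀ x y : E, ‖φ t x - φ t y‖ ≤ Real.exp (L * |t|) * ‖x - y‖) ∧
      (∀ x y : E, ‖φ (-t) x - φ (-t) y‖ ≤ Real.exp (L * |t|) * ‖x - y‖) ∧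
      (∃ h : E ≃ₜ E, ∀ x : E, h x = φ t x) := by
  set K : NNReal := ⟨L, hL⟩ with hK
  have hKL : (K : ℝ) = L := rfl
  have hgLip : LipschitzWith K f := by
    apply LipschitzWith.of_dist_le_mul
    intro x y
    simpa [dist_eq_norm, hKL] using hf x y
  -- distance estimate for all times
  have hdist : ∀ (s : ℝ) (x y : E), dist (φ s x) (φ s y) ≤ dist x y * Real.exp (L * |s|) := by
    intro s x y
    have := gronwall_aux2 f K hgLip (fun r => φ r x) (fun r => φ r y)
      (hφ' x) (hφ' y) s
    simpa [hφ0, hKL] using this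
  -- group property: φ (s + t) x = φ s (φ t x)
  have hgrp : ∀ (s τ : ℝ) (x : E), φ (s + τ) x = φ s (φ τ x) := by
    intro s τ x
    have hu : ∀ r, HasDerivAt (fun r => φ (r + τ) x) (f (φ (r + τ) x)) r := by
      intro r
      have := (hφ' x (r + τ)).scomp r ((hasDerivAt_id r).add_const τ)
      simpa [Function.comp_def] using this
    have hv := hφ' (φ τ x)
    have h0 : dist (φ (0 + τ) x) (φ 0 (φ τ x)) = 0 := by
      simp [hφ0]
    have := gronwall_aux2 f K hgLip (fun r => φ (r + τ) x) (fun r => φ r (φ τ x)) hu hv s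
    have h2 : dist (φ (s + τ) x) (φ s (φ τ x)) ≤ 0 := by
      simp only [h0, zero_mul] at this; exact this
    exact dist_le_zero.1 h2
  have hlinv : ∀ x : E, φ (-t) (φ t x) = x := fun x => by
    rw [← hgrp (-t) t x]; simp [hφ0]
  have hrinv : ∀ x : E, φ t (φ (-t) x) = x := fun x => by
    rw [← hgrp t (-t) x]; simp [hφ0]
  have hlipt : ∀ x y : E, ‖φ t x - φ t y‖ ≤ Real.exp (L * |t|) * ‖x - y‖ := by
    intro x y
    have := hdist t x y
    rw [dist_eq_norm, dist_eq_norm] at this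
    linarith [this]
  have hlipnt : ∀ x y : E, ‖φ (-t) x - φ (-t) y‖ ≤ Real.exp (L * |t|) * ‖x - y‖ := by
    intro x y
    have := hdist (-t) x y
    rw [dist_eq_norm, dist_eq_norm, abs_neg] at this
    linarith [this]
  have hcont : ∀ s : ℝ, Continuous (φ s) := by
    intro s
    have : LipschitzWith (Real.exp (L * |s|)).toNNReal (φ s) := by
      apply LipschitzWith.of_dist_le_mul
      intro x y
      have := hdist s x y
      rw [Real.coe_toNNReal _ (Real.exp_pos _).le]
      linarith [this]
    exact this.continuous
  refine ⟨?_, hlinv, hrinv, hlipt, hlipnt, ?_⟩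
  · exact Function.bijective_iff_has_inverse.2 ⟨φ (-t), hlinv, hrinv⟩
  · exact ⟨⟨⟨φ t, φ (-t), hlinv, hrinv⟩, hcont t, hcont (-t)⟩, fun x => rfl⟩
end

section
/- Let E be a real Banach space and f : E → E be twice continuously differentiable with ‖f(x)‖ ≤ M₀, ‖Df(x)‖ ≤ M₁, and ‖D²f(x)‖ ≤ M₂ for all x ∈ E. Then there exists a constant C, depending only on M₀, M₁, M₂, such that for every solution H of H' = f(H) defined on [t₀, t₀ + Δt] with 0 < Δt ≤ 1, the RK2 (midpoint) step satisfies ‖H(t₀ + Δt) − RK2(H(t₀))‖ ≤ C·Δt³, i.e., the second-order RK2 solver has local truncation error of order Δt³. -/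
open Set

/-- **The second-order RK2 solver has local truncation error of order `Δt³`.**
For every `M₀, M₁, M₂` there exists a constant `C`, depending only on `M₀, M₁, M₂`, such
that for every twice continuously differentiable vector field `f : E → E` with
`‖f‖ ≤ M₀`, `‖Df‖ ≤ M₁`, `‖D²f‖ ≤ M₂` everywhere, and every solution `H` of `H' = f(H)`
on `[t₀, t₀ + Δt]` with `0 < Δt ≤ 1`, the RK2 (midpoint) step satisfies
`‖H(t₀ + Δt) − RK2(H t₀)‖ ≤ C Δt³`. -/
theorem rk2_local_truncation_error
    {E : Type*} [NormedAddCommGroup E] [NormedSpace ℝ E] [CompleteSpace E]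
    (M₀ M₁ M₂ : ℝ) :
    ∃ C : ℝ, ∀ f : E → E,
      ContDiff ℝ 2 f →
      (∀ x : E, ‖f x‖ ≤ M₀) →
      (∀ x : E, ‖fderiv ℝ f x‖ ≤ M₁) →
      (∀ x : E, ‖fderiv ℝ (fderiv ℝ f) x‖ ≤ M₂) →
      ∀ (t₀ Δt : ℝ) (H : ℝ → E),
        0 < Δt → Δt ≤ 1 →
        (∀ s ∈ Set.Icc t₀ (t₀ + Δt), HasDerivAt H (f (H s)) s) →
        ‖H (t₀ + Δt) - (H t₀ + Δt • f (H t₀ + (Δt / 2) • f (H t₀)))‖ ≤ C * Δt ^ 3 := by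
  refine ⟨(M₂ * M₀ + M₁ ^ 2) * M₀ / 6 + M₂ * M₀ ^ 2 / 4, ?_⟩
  intro f hf hM0 hM1 hM2 t₀ Δt H hΔt hΔt1 hH
  have hM0' : 0 ≤ M₀ := le_trans (norm_nonneg _) (hM0 0)
  have hM1' : 0 ≤ M₁ := le_trans (norm_nonneg _) (hM1 0)
  have hM2' : 0 ≤ M₂ := le_trans (norm_nonneg _) (hM2 0)
  have hdiff : Differentiable ℝ f := hf.differentiable (by norm_num)
  have hdiff' : Differentiable ℝ (fderiv ℝ f) := by
    have : ContDiff ℝ 1 (fderiv ℝ f) := hf.fderiv_right (by norm_num)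
    exact this.differentiable one_ne_zero
  set x₀ := H t₀ with hx₀
  set K := (M₂ * M₀ + M₁ ^ 2) * M₀ with hK
  have hK' : 0 ≤ K := by positivity
  -- Lipschitz bounds
  have hfLip : ∀ a b : E, ‖f b - f a‖ ≤ M₁ * ‖b - a‖ := fun a b =>
    convex_univ.norm_image_sub_le_of_norm_fderiv_le (fun x _ => hdiff x)
      (fun x _ => hM1 x) (mem_univ a) (mem_univ b)
  have hDfLip : ∀ a b : E, ‖fderiv ℝ f b - fderiv ℝ f a‖ ≤ M₂ * ‖b - a‖ := fun a b =>
    convex_univ.norm_image_sub_le_of_norm_fderiv_le (fun x _ => hdiff' x)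
      (fun x _ => hM2 x) (mem_univ a) (mem_univ b)
  have hab : t₀ ≤ t₀ + Δt := by linarith
  have HCont : ContinuousOn H (Icc t₀ (t₀ + Δt)) := fun s hs =>
    ((hH s hs).continuousAt).continuousWithinAt
  -- Step 1: ‖H t - x₀‖ ≤ M₀ (t - t₀)
  have step1 : ∀ t ∈ Icc t₀ (t₀ + Δt), ‖H t - x₀‖ ≤ M₀ * (t - t₀) := by
    have := image_norm_le_of_norm_deriv_right_le_deriv_boundary
      (f := fun t => H t - x₀) (f' := fun t => f (H t)) (a := t₀) (b := t₀ + Δt)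
      (HCont.sub continuousOn_const)
      (fun x hx => (((hH x (Ico_subset_Icc_self hx)).sub_const x₀)).hasDerivWithinAt)
      (B := fun t => M₀ * (t - t₀)) (B' := fun _ => M₀)
      (by simp [hx₀])
      (fun x => by
        simpa using (((hasDerivAt_id x).sub_const t₀).const_mul M₀))
      (fun x _ => hM0 (H x))
    exact this
  set D₀ : E := (fderiv ℝ f x₀) (f x₀) with hD₀
  -- second derivative bound
  have step2bound : ∀ t ∈ Icc t₀ (t₀ + Δt),
      ‖(fderiv ℝ f (H t)) (f (H t)) - D₀‖ ≤ K * (t - t₀) := by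
    intro t ht
    have e1 : (fderiv ℝ f (H t)) (f (H t)) - D₀
        = (fderiv ℝ f (H t) - fderiv ℝ f x₀) (f (H t))
          + (fderiv ℝ f x₀) (f (H t) - f x₀) := by
      simp only [hD₀, map_sub, ContinuousLinearMap.sub_apply]
      abel
    rw [e1]
    have b1 : ‖(fderiv ℝ f (H t) - fderiv ℝ f x₀) (f (H t))‖
        ≤ (M₂ * ‖H t - x₀‖) * M₀ := by
      calc ‖(fderiv ℝ f (H t) - fderiv ℝ f x₀) (f (H t))‖
          ≤ ‖fderiv ℝ f (H t) - fderiv ℝ f x₀‖ * ‖f (H t)‖ :=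
            ContinuousLinearMap.le_opNorm _ _
        _ ≤ (M₂ * ‖H t - x₀‖) * M₀ := by
            apply mul_le_mul (hDfLip x₀ (H t)) (hM0 _) (norm_nonneg _)
            positivity
    have b2 : ‖(fderiv ℝ f x₀) (f (H t) - f x₀)‖ ≤ M₁ * (M₁ * ‖H t - x₀‖) := by
      calc ‖(fderiv ℝ f x₀) (f (H t) - f x₀)‖
          ≤ ‖fderiv ℝ f x₀‖ * ‖f (H t) - f x₀‖ := ContinuousLinearMap.le_opNorm _ _
        _ ≤ M₁ * (M₁ * ‖H t - x₀‖) := by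
            apply mul_le_mul (hM1 _) (hfLip x₀ (H t)) (norm_nonneg _) hM1'
    have hHt := step1 t ht
    have hnn : 0 ≤ ‖H t - x₀‖ := norm_nonneg _
    calc ‖(fderiv ℝ f (H t) - fderiv ℝ f x₀) (f (H t))
            + (fderiv ℝ f x₀) (f (H t) - f x₀)‖
        ≤ (M₂ * ‖H t - x₀‖) * M₀ + M₁ * (M₁ * ‖H t - x₀‖) :=
          le_trans (norm_add_le _ _) (add_le_add b1 b2)
      _ = (M₂ * M₀ + M₁ ^ 2) * ‖H t - x₀‖ := by ring
      _ ≤ (M₂ * M₀ + M₁ ^ 2) * (M₀ * (t - t₀)) := by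
          apply mul_le_mul_of_nonneg_left hHt; positivity
      _ = K * (t - t₀) := by rw [hK]; ring
  -- φ' and its bound
  set φ' : ℝ → E := fun t => f (H t) - f x₀ - (t - t₀) • D₀ with hφ'
  have hφ'deriv : ∀ t ∈ Icc t₀ (t₀ + Δt),
      HasDerivAt φ' ((fderiv ℝ f (H t)) (f (H t)) - D₀) t := by
    intro t ht
    have h1 : HasDerivAt (fun t => f (H t)) ((fderiv ℝ f (H t)) (f (H t))) t :=
      (hdiff (H t)).hasFDerivAt.comp_hasDerivAt t (hH t ht)
    have h2 : HasDerivAt (fun t : ℝ => (t - t₀) • D₀) ((1 : ℝ) • D₀) t :=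
      ((hasDerivAt_id t).sub_const t₀).smul_const D₀
    simpa [hφ', one_smul, Pi.sub_def] using (h1.sub_const (f x₀)).sub h2
  have hφ'cont : ContinuousOn φ' (Icc t₀ (t₀ + Δt)) := fun t ht =>
    ((hφ'deriv t ht).continuousAt).continuousWithinAt
  have step2 : ∀ t ∈ Icc t₀ (t₀ + Δt), ‖φ' t‖ ≤ K / 2 * (t - t₀) ^ 2 := by
    have := image_norm_le_of_norm_deriv_right_le_deriv_boundary
      (f := φ') (f' := fun t => (fderiv ℝ f (H t)) (f (H t)) - D₀) (a := t₀) (b := t₀ + Δt)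
      hφ'cont
      (fun x hx => (hφ'deriv x (Ico_subset_Icc_self hx)).hasDerivWithinAt)
      (B := fun t => K / 2 * (t - t₀) ^ 2) (B' := fun t => K * (t - t₀))
      (by simp [hφ', hx₀])
      (fun x => by
        have := (((hasDerivAt_id x).sub_const t₀).fun_pow 2).const_mul (K / 2)
        refine this.congr_deriv ?_
        simp only [id_eq]
        ring)
      (fun x hx => step2bound x (Ico_subset_Icc_self hx))
    exact this
  -- φ and its bound
  set φ : ℝ → E := fun t => H t - x₀ - (t - t₀) • f x₀ - ((t - t₀) ^ 2 / 2) • D₀ with hφ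
  have hφderiv : ∀ t ∈ Icc t₀ (t₀ + Δt), HasDerivAt φ (φ' t) t := by
    intro t ht
    have h1 : HasDerivAt (fun t : ℝ => (t - t₀) • f x₀) ((1 : ℝ) • f x₀) t :=
      ((hasDerivAt_id t).sub_const t₀).smul_const (f x₀)
    have h2 : HasDerivAt (fun t : ℝ => ((t - t₀) ^ 2 / 2) • D₀)
        ((2 * (t - t₀) ^ 1 * 1 / 2) • D₀) t :=
      ((((hasDerivAt_id t).sub_const t₀).pow 2).div_const 2).smul_const D₀
    have := (((hH t ht).sub_const x₀).sub h1).sub h2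
    convert this using 1
    · rfl
    simp only [hφ', pow_one]
    module
  have hφcont : ContinuousOn φ (Icc t₀ (t₀ + Δt)) := fun t ht =>
    ((hφderiv t ht).continuousAt).continuousWithinAt
  have step3 : ‖φ (t₀ + Δt)‖ ≤ K / 6 * Δt ^ 3 := by
    have := image_norm_le_of_norm_deriv_right_le_deriv_boundary
      (f := φ) (f' := φ') (a := t₀) (b := t₀ + Δt)
      hφcont
      (fun x hx => (hφderiv x (Ico_subset_Icc_self hx)).hasDerivWithinAt)
      (B := fun t => K / 6 * (t - t₀) ^ 3) (B' := fun t => K / 2 * (t - t₀) ^ 2)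
      (by simp [hφ, hx₀])
      (fun x => by
        have := (((hasDerivAt_id x).sub_const t₀).fun_pow 3).const_mul (K / 6)
        refine this.congr_deriv ?_
        simp only [id_eq]
        ring)
      (fun x hx => step2 x (Ico_subset_Icc_self hx))
    have := this (right_mem_Icc.2 hab)
    simpa using this
  -- RK2 freezing error
  set h : E := (Δt / 2) • f x₀ with hh
  have hhnorm : ‖h‖ ≤ Δt / 2 * M₀ := by
    rw [hh, norm_smul, Real.norm_eq_abs, abs_of_nonneg (by linarith : (0:ℝ) ≤ Δt / 2)]
    exact mul_le_mul_of_nonneg_left (hM0 _) (by linarith)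
  set r : ℝ := Δt / 2 * M₀ with hr
  have hr' : 0 ≤ r := by positivity
  have quad : ‖f (x₀ + h) - f x₀ - (fderiv ℝ f x₀) h‖ ≤ M₂ * r * r := by
    set g : E → E := fun y => f y - (fderiv ℝ f x₀) y with hg
    have hgd : ∀ y ∈ Metric.closedBall x₀ r,
        HasFDerivWithinAt g (fderiv ℝ f y - fderiv ℝ f x₀) (Metric.closedBall x₀ r) y :=
      fun y _ => ((hdiff y).hasFDerivAt.sub (fderiv ℝ f x₀).hasFDerivAt).hasFDerivWithinAt
    have hbd : ∀ y ∈ Metric.closedBall x₀ r, ‖fderiv ℝ f y - fderiv ℝ f x₀‖ ≤ M₂ * r := by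
      intro y hy
      refine le_trans (hDfLip x₀ y) ?_
      apply mul_le_mul_of_nonneg_left _ hM2'
      simpa [dist_eq_norm] using hy
    have hmem₁ : x₀ ∈ Metric.closedBall x₀ r := Metric.mem_closedBall_self hr'
    have hmem₂ : x₀ + h ∈ Metric.closedBall x₀ r := by
      simp [Metric.mem_closedBall, dist_eq_norm]
      exact hhnorm
    have := (convex_closedBall x₀ r).norm_image_sub_le_of_norm_hasFDerivWithin_le
      hgd hbd hmem₁ hmem₂
    have e : g (x₀ + h) - g x₀ = f (x₀ + h) - f x₀ - (fderiv ℝ f x₀) h := by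
      simp [hg, map_add]; abel
    rw [e] at this
    refine this.trans ?_
    apply mul_le_mul_of_nonneg_left _ (by positivity)
    simpa using hhnorm
  -- assemble
  have key : H (t₀ + Δt) - (x₀ + Δt • f (x₀ + h))
      = φ (t₀ + Δt) - Δt • (f (x₀ + h) - f x₀ - (fderiv ℝ f x₀) h) := by
    have e1 : (fderiv ℝ f x₀) h = (Δt / 2) • D₀ := by
      rw [hh, map_smul, hD₀]
    rw [hφ]
    simp only [add_sub_cancel_left, e1, smul_sub, smul_smul]
    module
  rw [key]
  calc ‖φ (t₀ + Δt) - Δt • (f (x₀ + h) - f x₀ - (fderiv ℝ f x₀) h)‖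
      ≤ ‖φ (t₀ + Δt)‖ + ‖Δt • (f (x₀ + h) - f x₀ - (fderiv ℝ f x₀) h)‖ := norm_sub_le _ _
    _ ≤ K / 6 * Δt ^ 3 + Δt * (M₂ * r * r) := by
        refine add_le_add step3 ?_
        rw [norm_smul, Real.norm_eq_abs, abs_of_pos hΔt]
        exact mul_le_mul_of_nonneg_left quad hΔt.le
    _ = ((M₂ * M₀ + M₁ ^ 2) * M₀ / 6 + M₂ * M₀ ^ 2 / 4) * Δt ^ 3 := by
        rw [hK, hr]; ring
end
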